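/- Along a Dinkelbach sequence, the values ρ^i = r(X^i) form a non-increasing sequence of real numbers, bounded below by ρ*, and hence convergent. -/

import Mathlib

/-- Along a Dinkelbach sequence, the values `ρ^i = f1 (X i) / f2 (X i)` form a
non-increasing sequence, bounded below by `ρ* = min_{X ∈ S} f1 X / f2 X`, hence convergent. -/
theorem dinkelbach_rho_monotone_convergent {M Q : ℕ} (hM : 0 < M) (hQ : 0 < Q)
    (S : Set (Matrix (Fin M) (Fin Q) ℝ)) (hSne : S.Nonempty) (hScomp : IsCompact S)
    (f1 f2 : Matrix (Fin M) (Fin Q) ℝ → ℝ)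
    (hf1 : Continuous f1) (hf2 : Continuous f2)
    (hf2pos : ∀ X ∈ S, 0 < f2 X)
    (Xseq : ℕ → Matrix (Fin M) (Fin Q) ℝ)
    (hmem : ∀ i, Xseq i ∈ S)
    (hmin : ∀ i, ∀ X ∈ S,
      f1 (Xseq (i + 1)) - (f1 (Xseq i) / f2 (Xseq i)) * f2 (Xseq (i + 1)) ≤
        f1 X - (f1 (Xseq i) / f2 (Xseq i)) * f2 X) :
    Antitone (fun i => f1 (Xseq i) / f2 (Xseq i)) ∧
    (∀ i, sInf ((fun X => f1 X / f2 X) '' S) ≤ f1 (Xseq i) / f2 (Xseq i)) ∧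
    ∃ l : ℝ, Filter.Tendsto (fun i => f1 (Xseq i) / f2 (Xseq i)) Filter.atTop (nhds l) := by
  have hanti : Antitone (fun i => f1 (Xseq i) / f2 (Xseq i)) := by
    apply antitone_nat_of_succ_le
    intro i
    have h := hmin i (Xseq i) (hmem i)
    have hfi : 0 < f2 (Xseq i) := hf2pos _ (hmem i)
    have hfi1 : 0 < f2 (Xseq (i + 1)) := hf2pos _ (hmem (i + 1))
    have hz : f1 (Xseq i) - (f1 (Xseq i) / f2 (Xseq i)) * f2 (Xseq i) = 0 := by
      field_simp; ring
    have h' : f1 (Xseq (i + 1)) ≤ (f1 (Xseq i) / f2 (Xseq i)) * f2 (Xseq (i + 1)) := by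
      linarith [h, hz]
    calc f1 (Xseq (i + 1)) / f2 (Xseq (i + 1))
        ≤ (f1 (Xseq i) / f2 (Xseq i)) * f2 (Xseq (i + 1)) / f2 (Xseq (i + 1)) := by
          exact div_le_div_of_nonneg_right h' hfi1.le |>.trans_eq rfl
      _ = f1 (Xseq i) / f2 (Xseq i) := by field_simp
  have hcont : ContinuousOn (fun X => f1 X / f2 X) S :=
    hf1.continuousOn.div hf2.continuousOn (fun x hx => (hf2pos x hx).ne')
  have hbdd : BddBelow ((fun X => f1 X / f2 X) '' S) :=
    (hScomp.image_of_continuousOn hcont).bddBelow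
  have hlb : ∀ i, sInf ((fun X => f1 X / f2 X) '' S) ≤ f1 (Xseq i) / f2 (Xseq i) :=
    fun i => csInf_le hbdd ⟨Xseq i, hmem i, rfl⟩
  refine ⟨hanti, hlb, ?_⟩
  have hbdd' : BddBelow (Set.range (fun i => f1 (Xseq i) / f2 (Xseq i))) :=
    ⟨sInf ((fun X => f1 X / f2 X) '' S), by rintro _ ⟨i, rfl⟩; exact hlb i⟩
  exact ⟨_, tendsto_atTop_ciInf hanti hbdd'⟩
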